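/- Let $X$ be a predual of $\ell_1$ such that all $\sigma(\ell_1, X)$-limit points of $\mathrm{ext}\,B_{\ell_1}$ lie in $rB_{\ell_1}$ for some $0 \le r < 1$. Let $Y$ be a Banach space and $A: X \to Y$ an isomorphism with $\|A\|\,\|A^{-1}\| < \frac{2}{1+r}$. Then for every convex $w^*$-compact $K \subset Y^*$, every nonexpansive $T: K \to K$ has a fixed point. -/

import Mathlib

open Filter Topology ENNReal NormedSpace

noncomputable section

instance : Fact ((1:ℝ≥0∞) ≤ 1) := ⟨le_rfl⟩

/-- The space `ℓ₁` of absolutely summable real sequences. -/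
abbrev ell1 : Type := lp (fun _ : ℕ => ℝ) 1

/-- The standard unit vector basis of `ℓ₁`. -/
def basisv (i : ℕ) : ell1 := lp.single 1 i (1:ℝ)

/-- The weak-star topology `σ(ℓ₁, X)` on `ℓ₁` induced by a predual `X` via an
isometric identification `e` of the dual of `X` with `ℓ₁`. -/
def wstar (X : Type*) [NormedAddCommGroup X] [NormedSpace ℝ X]
    (e : StrongDual ℝ X ≃ₗᵢ[ℝ] ell1) : TopologicalSpace ell1 :=
  TopologicalSpace.induced (fun y => StrongDual.toWeakDual (e.symm y)) inferInstance

/-- The weak-star topology `σ(Y*, Y)` on the dual of a normed space `Y`. -/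
def wsDual (Y : Type*) [NormedAddCommGroup Y] [NormedSpace ℝ Y] :
    TopologicalSpace (StrongDual ℝ Y) :=
  TopologicalSpace.induced (fun φ : StrongDual ℝ Y => StrongDual.toWeakDual φ)
    inferInstance

set_option linter.unusedSectionVars false

lemma e1norm (f : ell1) : ‖f‖ = ∑' i, |f i| := by
  rw [lp.norm_eq_tsum_rpow (by norm_num : 0 < (1:ℝ≥0∞).toReal)]
  simp [Real.rpow_one]

lemma e1summable (f : ell1) : Summable fun i => |f i| := by
  have h := lp.memℓp f
  rw [memℓp_gen_iff (by norm_num : 0 < (1:ℝ≥0∞).toReal)] at h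
  simpa using h

lemma finsum_le (f : ell1) (s : Finset ℕ) : ∑ i ∈ s, |f i| ≤ ‖f‖ := by
  rw [e1norm]
  exact Summable.sum_le_tsum s (fun i _ => abs_nonneg _) (e1summable f)

lemma coord_le (f : ell1) (i : ℕ) : |f i| ≤ ‖f‖ := by
  simpa using lp.norm_apply_le_norm (by norm_num : (1:ℝ≥0∞) ≠ 0) f i

lemma exists_ulim (U : Ultrafilter ℕ) {f : ℕ → ℝ} {C : ℝ} (hb : ∀ k, |f k| ≤ C) :
    ∃ L, Tendsto f ↑U (𝓝 L) ∧ |L| ≤ C := by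
  have hle : (U.map f : Filter ℝ) ≤ Filter.principal (Set.Icc (-C) C) := by
    rw [Filter.le_principal_iff]
    exact Filter.mem_map.2 (Filter.Eventually.of_forall (fun k => abs_le.1 (hb k)))
  obtain ⟨L, hL, hconv⟩ := isCompact_Icc.ultrafilter_le_nhds (U.map f) hle
  exact ⟨L, hconv, abs_le.2 hL⟩

-- tail of an ℓ¹ function tends to 0
lemma tail_small (f : ell1) {ε : ℝ} (hε : 0 < ε) : ∃ N : ℕ, ∑' i, |f (i + N)| ≤ ε := by
  have hs := e1summable f
  have := (tendsto_sum_nat_add fun i => |f i|)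
  rcases (this.eventually (gt_mem_nhds hε)).exists with ⟨N, hN⟩
  exact ⟨N, le_of_lt hN⟩

lemma tsum_split (f : ell1) (N : ℕ) : ‖f‖ = (∑ i ∈ Finset.range N, |f i|) + ∑' i, |f (i + N)| := by
  rw [e1norm, ← Summable.sum_add_tsum_nat_add N (e1summable f)]

lemma shift_summable (f : ell1) (N : ℕ) : Summable fun i => |f (i + N)| :=
  (summable_nat_add_iff N).2 (e1summable f)

lemma split_norm (f : ell1) (N : ℕ) :
    ‖f‖ = (∑ i ∈ Finset.range N, |f i|) + ∑' i, |f (i + N)| := by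
  rw [e1norm, ← Summable.sum_add_tsum_nat_add N (e1summable f)]

/-- pointwise two-sided bound -/
lemma split_bound (w ζ : ell1) (N : ℕ) :
    |‖w + ζ‖ - (‖w‖ + ‖ζ‖)| ≤
      2 * (∑' i, |w (i + N)|) + 2 * (∑ i ∈ Finset.range N, |ζ i|) := by
  have hadd : ∀ i, (w + ζ) i = w i + ζ i := fun i => lp.coeFn_add w ζ ▸ rfl
  have hW := split_norm w N
  have hZ := split_norm ζ N
  have hS := split_norm (w + ζ) N
  set tw := ∑' i, |w (i + N)| with htw
  set hd := ∑ i ∈ Finset.range N, |ζ i| with hhd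
  have htwnn : 0 ≤ tw := tsum_nonneg fun i => abs_nonneg _
  have hhdnn : 0 ≤ hd := Finset.sum_nonneg fun i _ => abs_nonneg _
  have hupper : ‖w + ζ‖ ≤ ‖w‖ + ‖ζ‖ := norm_add_le w ζ
  have hlower : ‖w‖ + ‖ζ‖ - 2 * tw - 2 * hd ≤ ‖w + ζ‖ := by
    have h1 : ∑ i ∈ Finset.range N, |w i| - hd ≤ ∑ i ∈ Finset.range N, |(w + ζ) i| := by
      rw [hhd, ← Finset.sum_sub_distrib]
      refine Finset.sum_le_sum fun i _ => ?_
      rw [hadd i]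
      have := abs_sub_abs_le_abs_sub (w i) (-(ζ i))
      simpa using this
    have h2 : (∑' i, |ζ (i + N)|) - tw ≤ ∑' i, |(w + ζ) (i + N)| := by
      rw [htw, ← Summable.tsum_sub (shift_summable ζ N) (shift_summable w N)]
      refine Summable.tsum_le_tsum (fun i => ?_) ((shift_summable ζ N).sub (shift_summable w N))
        (shift_summable (w + ζ) N)
      rw [hadd]
      have := abs_sub_abs_le_abs_sub (ζ (i + N)) (-(w (i + N)))
      have h' : |w (i + N) + ζ (i + N)| = |ζ (i + N) - -(w (i + N))| := by ring_nf
      simpa [h'] using this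
    have hwsum : ∑ i ∈ Finset.range N, |w i| = ‖w‖ - tw := by rw [hW]; ring
    have hcomb := add_le_add h1 h2
    rw [hwsum] at hcomb
    rw [hS]
    linarith [hcomb, hZ]
  rw [abs_le]
  constructor <;> linarith

lemma step5 (U : Ultrafilter ℕ) (ζ : ℕ → ell1) (c : ℝ)
    (hcoord : ∀ i, Tendsto (fun k => (ζ k : ∀ _ : ℕ, ℝ) i) ↑U (𝓝 0))
    (hnorm : Tendsto (fun k => ‖ζ k‖) ↑U (𝓝 c)) (w : ell1) :
    Tendsto (fun k => ‖w + ζ k‖) ↑U (𝓝 (‖w‖ + c)) := by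
  rw [Metric.tendsto_nhds]
  intro ε hε
  obtain ⟨N, hN⟩ := tail_small w (by linarith : 0 < ε/8)
  have hhd : Tendsto (fun k => ∑ i ∈ Finset.range N, |(ζ k : ∀ _ : ℕ, ℝ) i|) ↑U (𝓝 0) := by
    have : Tendsto (fun k => ∑ i ∈ Finset.range N, |(ζ k : ∀ _ : ℕ, ℝ) i|) ↑U
        (𝓝 (∑ i ∈ Finset.range N, |(0:ℝ)|)) :=
      tendsto_finset_sum _ fun i _ => (hcoord i).abs
    simpa using this
  have h1 : ∀ᶠ k in ↑U, ∑ i ∈ Finset.range N, |(ζ k : ∀ _ : ℕ, ℝ) i| < ε/8 := by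
    have := hhd.eventually (gt_mem_nhds (by linarith : (0:ℝ) < ε/8))
    simpa using this
  have h2 : ∀ᶠ k in ↑U, |‖ζ k‖ - c| < ε/8 := by
    have := hnorm.eventually (Metric.ball_mem_nhds c (by linarith : (0:ℝ) < ε/8))
    simpa [Real.dist_eq] using this
  filter_upwards [h1, h2] with k hk1 hk2
  have hb := split_bound w (ζ k) N
  have hhdnn : 0 ≤ ∑ i ∈ Finset.range N, |(ζ k : ∀ _ : ℕ, ℝ) i| :=
    Finset.sum_nonneg fun i _ => abs_nonneg _
  rw [Real.dist_eq]
  have : |‖w + ζ k‖ - (‖w‖ + c)| ≤ |‖w + ζ k‖ - (‖w‖ + ‖ζ k‖)| + |‖ζ k‖ - c| := by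
    have h3 : ‖w + ζ k‖ - (‖w‖ + c) = (‖w + ζ k‖ - (‖w‖ + ‖ζ k‖)) + (‖ζ k‖ - c) := by ring
    rw [h3]; exact abs_add_le _ _
  calc |‖w + ζ k‖ - (‖w‖ + c)| ≤ |‖w + ζ k‖ - (‖w‖ + ‖ζ k‖)| + |‖ζ k‖ - c| := this
    _ ≤ (2 * (∑' i, |w (i + N)|) + 2 * (∑ i ∈ Finset.range N, |(ζ k : ∀ _ : ℕ, ℝ) i|)) + |‖ζ k‖ - c| := by
        exact add_le_add hb le_rfl
    _ < ε := by
        have : (∑' i, |w (i + N)|) ≤ ε/8 := hN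
        linarith

lemma norm_basisv (i : ℕ) : ‖basisv i‖ = 1 := by
  have := lp.norm_single (p := 1) (E := fun _ : ℕ => ℝ) (by norm_num : (0:ℝ≥0∞) < 1) i (1:ℝ)
  simpa [basisv] using this

lemma basisv_apply (i j : ℕ) : (basisv i : ∀ _ : ℕ, ℝ) j = if j = i then 1 else 0 := by
  simp [basisv, lp.single_apply, Pi.single_apply]
  
lemma basisv_inj : Function.Injective basisv := by
  intro i j h
  by_contra hne
  have h1 : (basisv i : ∀ _ : ℕ, ℝ) i = 1 := by simp [basisv_apply]
  have h2 : (basisv j : ∀ _ : ℕ, ℝ) i = 0 := by simp [basisv_apply]; exact fun a => absurd a hne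
  rw [h] at h1
  rw [h1] at h2
  norm_num at h2

lemma single_eq_smul (z : ell1) (i : ℕ) : lp.single 1 i ((z : ∀ _ : ℕ, ℝ) i) = z i • basisv i := by
  ext j
  by_cases h : j = i
  · subst h
    simp [lp.coeFn_smul, basisv_apply, lp.single_apply]
  · simp [lp.coeFn_smul, basisv_apply, lp.single_apply, h]

section pairing
variable {X : Type*} [NormedAddCommGroup X] [NormedSpace ℝ X]
  (e : StrongDual ℝ X ≃ₗᵢ[ℝ] ell1)

lemma pairing_hasSum (z : ell1) (x : X) :
    HasSum (fun i => (z : ∀ _ : ℕ, ℝ) i * (e.symm (basisv i)) x) ((e.symm z) x) := by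
  have hs : HasSum (fun i => lp.single 1 i ((z : ∀ _ : ℕ, ℝ) i)) z :=
    lp.hasSum_single (by norm_num) z
  set Φ : ell1 →L[ℝ] ℝ :=
    ((ContinuousLinearMap.apply ℝ ℝ x).comp
      (e.symm.toContinuousLinearEquiv.toContinuousLinearMap)) with hΦ
  have hΦap : ∀ f : ell1, Φ f = (e.symm f) x := fun f => rfl
  have h2 := Φ.hasSum hs
  rw [hΦap] at h2
  convert h2 using 2 with i
  rw [single_eq_smul, map_smul]
  rw [hΦap]
  simp


lemma pairing_abs_le' (z : ell1) (x : X) (I : ℕ) (s : ℝ) (hs : 0 ≤ s)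
    (hbound : ∀ i, I ≤ i → |(e.symm (basisv i)) x| ≤ s) :
    |(e.symm z) x| ≤ ‖x‖ * (∑ i ∈ Finset.range I, |(z : ∀ _ : ℕ, ℝ) i|) + s * ‖z‖ := by
  have hp : ∀ i, |(e.symm (basisv i)) x| ≤ ‖x‖ := by
    intro i
    calc |(e.symm (basisv i)) x| ≤ ‖e.symm (basisv i)‖ * ‖x‖ :=
          (e.symm (basisv i)).le_opNorm x
      _ = ‖x‖ := by rw [e.symm.norm_map, norm_basisv, one_mul]
  have hf : ∀ i, |(z : ∀ _ : ℕ, ℝ) i * (e.symm (basisv i)) x| ≤ |(z : ∀ _ : ℕ, ℝ) i| * ‖x‖ := by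
    intro i
    rw [abs_mul]
    exact mul_le_mul_of_nonneg_left (hp i) (abs_nonneg _)
  have hsummable : Summable fun i => |(z : ∀ _ : ℕ, ℝ) i * (e.symm (basisv i)) x| := by
    refine Summable.of_nonneg_of_le (fun i => abs_nonneg _) hf ?_
    exact (e1summable z).mul_right ‖x‖
  have habs : |(e.symm z) x| ≤ ∑' i, |(z : ∀ _ : ℕ, ℝ) i * (e.symm (basisv i)) x| := by
    rw [← (pairing_hasSum e z x).tsum_eq]
    have hsummable' : Summable fun i => ‖(z : ∀ _ : ℕ, ℝ) i * (e.symm (basisv i)) x‖ := by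
      simp only [Real.norm_eq_abs]; exact hsummable
    have := norm_tsum_le_tsum_norm hsummable'
    simp only [Real.norm_eq_abs] at this
    exact this
  have hsplit : (∑' i, |(z : ∀ _ : ℕ, ℝ) i * (e.symm (basisv i)) x|) =
      (∑ i ∈ Finset.range I, |(z : ∀ _ : ℕ, ℝ) i * (e.symm (basisv i)) x|)
      + ∑' i, |(z : ∀ _ : ℕ, ℝ) (i + I) * (e.symm (basisv (i + I))) x| :=
    (Summable.sum_add_tsum_nat_add I hsummable).symm
  have hhead : (∑ i ∈ Finset.range I, |(z : ∀ _ : ℕ, ℝ) i * (e.symm (basisv i)) x|)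
      ≤ (∑ i ∈ Finset.range I, |(z : ∀ _ : ℕ, ℝ) i|) * ‖x‖ := by
    rw [Finset.sum_mul]
    exact Finset.sum_le_sum fun i _ => hf i
  have htail : (∑' i, |(z : ∀ _ : ℕ, ℝ) (i + I) * (e.symm (basisv (i + I))) x|)
      ≤ s * ∑' i, |(z : ∀ _ : ℕ, ℝ) (i + I)| := by
    rw [← tsum_mul_left]
    refine Summable.tsum_le_tsum (fun i => ?_) ((summable_nat_add_iff I).2 hsummable)
      ((shift_summable z I).mul_left s)
    rw [abs_mul, mul_comm]
    exact mul_le_mul_of_nonneg_right (hbound (i + I) (Nat.le_add_left I i)) (abs_nonneg _)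
  have htail2 : (∑' i, |(z : ∀ _ : ℕ, ℝ) (i + I)|) ≤ ‖z‖ := by
    rw [split_norm z I]
    have : 0 ≤ ∑ i ∈ Finset.range I, |(z : ∀ _ : ℕ, ℝ) i| :=
      Finset.sum_nonneg fun i _ => abs_nonneg _
    linarith
  calc |(e.symm z) x| ≤ _ := habs
    _ = _ := hsplit
    _ ≤ (∑ i ∈ Finset.range I, |(z : ∀ _ : ℕ, ℝ) i|) * ‖x‖ + s * ∑' i, |(z : ∀ _ : ℕ, ℝ) (i + I)| :=
        add_le_add hhead htail
    _ ≤ ‖x‖ * (∑ i ∈ Finset.range I, |(z : ∀ _ : ℕ, ℝ) i|) + s * ‖z‖ := by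
        rw [mul_comm]
        exact add_le_add le_rfl (mul_le_mul_of_nonneg_left htail2 hs)

end pairing

section six_a
variable {X : Type*} [NormedAddCommGroup X] [NormedSpace ℝ X] [CompleteSpace X]
  (e : StrongDual ℝ X ≃ₗᵢ[ℝ] ell1) {r : ℝ}

lemma basis_eventually
    (hlim : ∀ y : ell1,
      y ∈ @closure _ (wstar X e) ({z : ell1 | ∃ i, z = basisv i ∨ z = -basisv i} \ {y}) →
      ‖y‖ ≤ r)
    (x : X) {ε : ℝ} (hε : 0 < ε) :
    ∀ᶠ i in atTop, |(e.symm (basisv i)) x| ≤ (r + ε) * ‖x‖ := by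
  by_cases hx : x = 0
  · subst hx
    filter_upwards [] with i
    simp
  have hxpos : 0 < ‖x‖ := norm_pos_iff.2 hx
  rw [← Nat.cofinite_eq_atTop, Filter.eventually_cofinite]
  by_contra hinf
  rw [← Set.not_infinite, not_not] at hinf
  -- the "bad" set of indices
  set Bad : Set ℕ := {i | ¬|(e.symm (basisv i)) x| ≤ (r + ε) * ‖x‖} with hBad
  -- the weak-star picture
  set g : ell1 → WeakDual ℝ X := fun z => StrongDual.toWeakDual (e.symm z) with hg
  set P : Set (WeakDual ℝ X) := WeakDual.toStrongDual ⁻¹' Metric.closedBall 0 1 with hP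
  have hcptP : IsCompact P := WeakDual.isCompact_closedBall (0 : StrongDual ℝ X) 1
  set L : Filter ℕ := atTop ⊓ Filter.principal Bad with hL
  have hLne : L.NeBot := by
    rw [hL, ← frequently_iff_neBot]
    exact Nat.frequently_atTop_iff_infinite.2 hinf
  set u : ℕ → WeakDual ℝ X := fun i => g (basisv i) with hu
  have huP : ∀ i, u i ∈ P := by
    intro i
    have hnorm : ‖e.symm (basisv i)‖ = 1 := by rw [e.symm.norm_map, norm_basisv]
    simp only [hP, Set.mem_preimage, Metric.mem_closedBall]
    have hconv : WeakDual.toStrongDual (u i) = e.symm (basisv i) := rfl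
    rw [hconv, dist_zero_right, hnorm]
  have hle : Filter.map u L ≤ Filter.principal P :=
    Filter.le_principal_iff.2 (Filter.mem_map.2 (Filter.Eventually.of_forall huP))
  obtain ⟨w, hwP, hcl⟩ := hcptP hle
  -- w = g y
  set y : ell1 := e (WeakDual.toStrongDual w) with hy
  have hgy : g y = w := by
    simp only [hg, hy]
    rw [e.symm_apply_apply]
    rfl
  -- y is in the closure of the basis set minus itself
  have hclos : y ∈ @closure _ (wstar X e)
      ({z : ell1 | ∃ i, z = basisv i ∨ z = -basisv i} \ {y}) := by
    have : (wstar X e) = TopologicalSpace.induced g inferInstance := rfl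
    rw [this, closure_induced, hgy]
    rw [mem_closure_iff]
    intro o ho hwo
    -- use cluster point
    have hVpre : {i | i ∈ Bad ∧ basisv i ≠ y} ∈ L := by
      rw [hL, Filter.mem_inf_iff_superset]
      refine ⟨{i | basisv i ≠ y}, ?_, Bad, Filter.mem_principal_self Bad, ?_⟩
      · rw [← Nat.cofinite_eq_atTop, Filter.mem_cofinite]
        have hss : {i | basisv i ≠ y}ᶜ.Subsingleton := by
          intro a ha b hb
          simp only [Set.mem_compl_iff, Set.mem_setOf_eq, not_not] at ha hb
          exact basisv_inj (ha.trans hb.symm)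
        exact hss.finite
      · intro i hi
        exact ⟨hi.2, hi.1⟩
    have hV : u '' {i | i ∈ Bad ∧ basisv i ≠ y} ∈ Filter.map u L :=
      Filter.mem_map.2 (Filter.mem_of_superset hVpre (Set.subset_preimage_image u _))
    obtain ⟨ψ, hψo, hψV⟩ := (clusterPt_iff_nonempty.1 hcl) (ho.mem_nhds hwo) hV
    obtain ⟨i, ⟨hiBad, hiy⟩, rfl⟩ := hψV
    refine ⟨u i, hψo, ?_⟩
    exact ⟨basisv i, ⟨⟨i, Or.inl rfl⟩, hiy⟩, rfl⟩
  have hyr : ‖y‖ ≤ r := hlim y hclos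
  -- w satisfies the lower bound on the pairing
  set Q : Set (WeakDual ℝ X) := {ψ | (r + ε) * ‖x‖ ≤ |ψ x|} with hQ
  have hQclosed : IsClosed Q := by
    have hcont : Continuous fun ψ : WeakDual ℝ X => |ψ x| :=
      (WeakDual.eval_continuous x).abs
    exact isClosed_le continuous_const hcont
  have huQ : ∀ i ∈ Bad, u i ∈ Q := by
    intro i hi
    simp only [hQ, Set.mem_setOf_eq]
    have : ¬|(e.symm (basisv i)) x| ≤ (r + ε) * ‖x‖ := hi
    have h2 : (u i : WeakDual ℝ X) x = (e.symm (basisv i)) x := rfl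
    rw [h2]
    linarith [not_le.1 this]
  have hwQ : w ∈ Q := by
    have hleQ : Filter.map u L ≤ Filter.principal Q := by
      rw [Filter.le_principal_iff]
      refine Filter.mem_map.2 ?_
      have : Bad ∈ L := by rw [hL]; exact Filter.mem_inf_of_right (Filter.mem_principal_self _)
      exact Filter.mem_of_superset this huQ
    have : ClusterPt w (Filter.principal Q) := hcl.mono hleQ
    rw [← mem_closure_iff_clusterPt] at this
    rwa [hQclosed.closure_eq] at this
  -- contradiction
  have hub : |(w : WeakDual ℝ X) x| ≤ r * ‖x‖ := by
    have h2 : (w : WeakDual ℝ X) x = (e.symm y) x := by rw [← hgy]; rfl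
    rw [h2]
    calc |(e.symm y) x| ≤ ‖e.symm y‖ * ‖x‖ := (e.symm y).le_opNorm x
      _ = ‖y‖ * ‖x‖ := by rw [e.symm.norm_map]
      _ ≤ r * ‖x‖ := mul_le_mul_of_nonneg_right hyr (norm_nonneg x)
  have := hwQ
  simp only [hQ, Set.mem_setOf_eq] at this
  nlinarith
end six_a

section Jmap
variable {X : Type*} [NormedAddCommGroup X] [NormedSpace ℝ X] [CompleteSpace X]
  (e : StrongDual ℝ X ≃ₗᵢ[ℝ] ell1)
  {Y : Type*} [NormedAddCommGroup Y] [NormedSpace ℝ Y] [CompleteSpace Y]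
  (A : X ≃L[ℝ] Y)

def Jmap (ψ : StrongDual ℝ Y) : ell1 := e (ψ.comp (A : X →L[ℝ] Y))

lemma Jmap_sub (ψ ψ' : StrongDual ℝ Y) :
    Jmap e A (ψ - ψ') = Jmap e A ψ - Jmap e A ψ' := by
  rw [Jmap, Jmap, Jmap, ← map_sub, ContinuousLinearMap.sub_comp]

lemma Jmap_norm_le (ψ : StrongDual ℝ Y) :
    ‖Jmap e A ψ‖ ≤ ‖(A : X →L[ℝ] Y)‖ * ‖ψ‖ := by
  rw [Jmap, e.norm_map]
  calc ‖ψ.comp (A : X →L[ℝ] Y)‖ ≤ ‖ψ‖ * ‖(A : X →L[ℝ] Y)‖ := ψ.opNorm_comp_le _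
    _ = ‖(A : X →L[ℝ] Y)‖ * ‖ψ‖ := mul_comm _ _

lemma norm_le_Jmap (ψ : StrongDual ℝ Y) :
    ‖ψ‖ ≤ ‖(A.symm : Y →L[ℝ] X)‖ * ‖Jmap e A ψ‖ := by
  rw [Jmap, e.norm_map]
  have hcomp : (ψ.comp (A : X →L[ℝ] Y)).comp (A.symm : Y →L[ℝ] X) = ψ := by
    ext y; simp
  calc ‖ψ‖ = ‖(ψ.comp (A : X →L[ℝ] Y)).comp (A.symm : Y →L[ℝ] X)‖ := by rw [hcomp]
    _ ≤ ‖ψ.comp (A : X →L[ℝ] Y)‖ * ‖(A.symm : Y →L[ℝ] X)‖ := ContinuousLinearMap.opNorm_comp_le _ _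
    _ = ‖(A.symm : Y →L[ℝ] X)‖ * ‖ψ.comp (A : X →L[ℝ] Y)‖ := mul_comm _ _

lemma Jmap_pair (ψ : StrongDual ℝ Y) (x : X) :
    (e.symm (Jmap e A ψ)) x = ψ (A x) := by
  rw [Jmap, e.symm_apply_apply]
  rfl

end Jmap

section Kfacts
variable {Y : Type*} [NormedAddCommGroup Y] [NormedSpace ℝ Y] [CompleteSpace Y]
  {K : Set (StrongDual ℝ Y)}

lemma K_compact_image (hcpt : @IsCompact _ (wsDual Y) K) :
    IsCompact ((fun φ : StrongDual ℝ Y => StrongDual.toWeakDual φ) '' K) := by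
  exact @IsCompact.image _ _ (wsDual Y) _ _ _ hcpt (@continuous_induced_dom _ _ _ _)

lemma K_bounded (hcpt : @IsCompact _ (wsDual Y) K) :
    ∃ B : ℝ, 0 ≤ B ∧ ∀ ψ ∈ K, ‖ψ‖ ≤ B := by
  have himg := K_compact_image hcpt
  by_cases hKne : K.Nonempty
  · have hBS : ∃ C', ∀ ψ : ↥K, ‖(ψ : StrongDual ℝ Y)‖ ≤ C' := by
      haveI : Nonempty ↥K := hKne.to_subtype
      apply banach_steinhaus (g := fun ψ : ↥K => (ψ : StrongDual ℝ Y))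
      intro y
      have hc : IsCompact ((fun w : WeakDual ℝ Y => w y) ''
          ((fun φ : StrongDual ℝ Y => StrongDual.toWeakDual φ) '' K)) :=
        himg.image (WeakDual.eval_continuous y)
      obtain ⟨C, hC⟩ := hc.isBounded.subset_closedBall 0
      refine ⟨C, fun ψ => ?_⟩
      have hmem : (ψ : StrongDual ℝ Y) y ∈ (fun w : WeakDual ℝ Y => w y) ''
          ((fun φ : StrongDual ℝ Y => StrongDual.toWeakDual φ) '' K) :=
        ⟨StrongDual.toWeakDual (ψ : StrongDual ℝ Y),
          Set.mem_image_of_mem _ ψ.2, rfl⟩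
      have := hC hmem
      rwa [Metric.mem_closedBall, dist_zero_right] at this
    obtain ⟨C', hC'⟩ := hBS
    refine ⟨max C' 0, le_max_right _ _, fun ψ hψ => le_max_of_le_left (hC' ⟨ψ, hψ⟩)⟩
  · exact ⟨0, le_rfl, fun ψ hψ => absurd ⟨ψ, hψ⟩ hKne⟩

lemma K_closed (hcpt : @IsCompact _ (wsDual Y) K) : IsClosed K := by
  have hT2 : @T2Space _ (wsDual Y) :=
    @T2Space.of_injective_continuous _ _ (wsDual Y) _ _ _
      StrongDual.toWeakDual.injective (@continuous_induced_dom _ _ _ _)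
  have h1 : @IsClosed _ (wsDual Y) K := @IsCompact.isClosed _ (wsDual Y) hT2 _ hcpt
  have hcont : Continuous[_, wsDual Y] (id : StrongDual ℝ Y → StrongDual ℝ Y) := by
    rw [continuous_iff_le_induced, wsDual, induced_compose]
    exact continuous_iff_le_induced.1 NormedSpace.Dual.toWeakDual_continuous
  have := @IsClosed.preimage _ _ _ (wsDual Y) id hcont _ h1
  simpa using this
end Kfacts

section afps
variable {Y : Type*} [NormedAddCommGroup Y] [NormedSpace ℝ Y] [CompleteSpace Y]

set_option maxHeartbeats 1000000 in
lemma afps_exists (T : StrongDual ℝ Y → StrongDual ℝ Y)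
    {K W : Set (StrongDual ℝ Y)} {B : ℝ} (hB0 : 0 ≤ B)
    (hBnd : ∀ ψ ∈ K, ‖ψ‖ ≤ B)
    (hnonexp : ∀ x ∈ K, ∀ y ∈ K, ‖T x - T y‖ ≤ ‖x - y‖)
    (hWK : W ⊆ K) (hWne : W.Nonempty) (hWconv : Convex ℝ W) (hWcl : IsClosed W)
    (hWinv : Set.MapsTo T W W) {ε : ℝ} (hε : 0 < ε) :
    ∃ ψ ∈ W, ‖ψ - T ψ‖ ≤ ε := by
  obtain ⟨w₀, hw₀⟩ := hWne
  set δ : ℝ := min 1 (ε / (2 * B + 1)) with hδ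
  have hδpos : 0 < δ := lt_min one_pos (div_pos hε (by linarith))
  have hδ1 : δ ≤ 1 := min_le_left _ _
  set t : ℝ := 1 - δ with ht
  have ht0 : 0 ≤ t := by simp only [ht]; linarith
  have ht1 : t < 1 := by simp only [ht]; linarith
  haveI : CompleteSpace ↥W := hWcl.completeSpace_coe
  haveI : Nonempty ↥W := ⟨⟨w₀, hw₀⟩⟩
  have hmem : ∀ ψ : ↥W, δ • w₀ + t • T (ψ : StrongDual ℝ Y) ∈ W := by
    intro ψ
    exact hWconv hw₀ (hWinv ψ.2) hδpos.le ht0 (by simp only [ht]; ring)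
  set S : ↥W → ↥W := fun ψ => ⟨δ • w₀ + t • T (ψ : StrongDual ℝ Y), hmem ψ⟩ with hS
  have hlip : LipschitzWith ⟨t, ht0⟩ S := by
    apply LipschitzWith.of_dist_le_mul
    intro ψ ψ'
    have h1 : dist (S ψ) (S ψ') = ‖t • T (ψ : StrongDual ℝ Y) - t • T (ψ' : StrongDual ℝ Y)‖ := by
      rw [Subtype.dist_eq, dist_eq_norm]
      congr 1
      simp only [hS]
      abel
    rw [h1]
    change ‖_‖ ≤ t * dist ψ ψ'
    rw [show ‖t • T (ψ : StrongDual ℝ Y) - t • T (ψ' : StrongDual ℝ Y)‖ = ‖t • (T (ψ : StrongDual ℝ Y) - T ψ')‖ from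
      congrArg norm (smul_sub t _ _).symm, norm_smul, Real.norm_eq_abs, abs_of_nonneg ht0, Subtype.dist_eq,
      dist_eq_norm]
    have h2 : ‖T (ψ : StrongDual ℝ Y) - T (ψ' : StrongDual ℝ Y)‖ ≤ ‖(ψ : StrongDual ℝ Y) - ψ'‖ :=
      hnonexp _ (hWK ψ.2) _ (hWK ψ'.2)
    calc t * ‖T (ψ : StrongDual ℝ Y) - T (ψ' : StrongDual ℝ Y)‖
        ≤ t * ‖(ψ : StrongDual ℝ Y) - ψ'‖ := mul_le_mul_of_nonneg_left h2 ht0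
      _ = _ := rfl
  have hcontr : ContractingWith ⟨t, ht0⟩ S := by
    refine ⟨?_, hlip⟩
    change t < 1
    exact ht1
  obtain ⟨y, hy, _, _⟩ := hcontr.exists_fixedPoint (⟨w₀, hw₀⟩ : ↥W) (edist_ne_top _ _)
  set ψ : StrongDual ℝ Y := (y : StrongDual ℝ Y) with hψ
  have hfix : δ • w₀ + t • T ψ = ψ := congrArg Subtype.val hy
  refine ⟨ψ, y.2, ?_⟩
  set q : StrongDual ℝ Y := T ψ with hq
  have hfix' : ψ = δ • w₀ + t • q := hfix.symm
  have hsub : ψ - q = δ • (w₀ - q) := by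
    rw [hfix', ht]
    module
  rw [show ψ - T ψ = ψ - q from rfl, hsub, norm_smul, Real.norm_eq_abs, abs_of_nonneg hδpos.le]
  have hTψ : ‖q‖ ≤ B := hBnd _ (hWK (hWinv y.2))
  have hw₀B : ‖w₀‖ ≤ B := hBnd _ (hWK hw₀)
  have h3 : ‖w₀ - q‖ ≤ 2 * B := by
    calc ‖w₀ - q‖ ≤ ‖w₀‖ + ‖q‖ := norm_sub_le _ _
      _ ≤ 2 * B := by linarith
  have hδ2 : δ ≤ ε / (2 * B + 1) := min_le_right _ _
  calc δ * ‖w₀ - q‖ ≤ δ * (2 * B) := mul_le_mul_of_nonneg_left h3 hδpos.le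
    _ ≤ (ε / (2 * B + 1)) * (2 * B) := mul_le_mul_of_nonneg_right hδ2 (by linarith)
    _ ≤ ε := by
        rw [div_mul_eq_mul_div, div_le_iff₀ (by linarith : (0:ℝ) < 2 * B + 1)]
        nlinarith
end afps

lemma mem_ell1_of_sums {g : ℕ → ℝ} {C : ℝ} (h : ∀ s : Finset ℕ, ∑ i ∈ s, |g i| ≤ C) :
    Memℓp g (1 : ℝ≥0∞) := by
  refine memℓp_gen' (C := C) ?_
  intro s
  have := h s
  simpa using this


section Stage
variable {X : Type*} [NormedAddCommGroup X] [NormedSpace ℝ X] [CompleteSpace X]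
  (e : StrongDual ℝ X ≃ₗᵢ[ℝ] ell1)
  {Y : Type*} [NormedAddCommGroup Y] [NormedSpace ℝ Y] [CompleteSpace Y]
  (A : X ≃L[ℝ] Y) {r : ℝ}
  {K : Set (StrongDual ℝ Y)}
  (T : StrongDual ℝ Y → StrongDual ℝ Y)
  (U : Ultrafilter ℕ)

set_option maxHeartbeats 2000000 in
lemma stage (hr0 : 0 ≤ r)
    (hbasis : ∀ (x : X) {ε : ℝ}, 0 < ε →
      ∀ᶠ i in atTop, |(e.symm (basisv i)) x| ≤ (r + ε) * ‖x‖)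
    {B : ℝ} (hB0 : 0 ≤ B) (hBnd : ∀ ψ ∈ K, ‖ψ‖ ≤ B)
    (hKconv : Convex ℝ K) (hKcl : IsClosed K)
    (hcptimg : IsCompact ((fun φ : StrongDual ℝ Y => StrongDual.toWeakDual φ) '' K))
    (hT : Set.MapsTo T K K)
    (hnonexp : ∀ x ∈ K, ∀ y ∈ K, ‖T x - T y‖ ≤ ‖x - y‖)
    (hU : ↑U ≤ (atTop : Filter ℕ))
    {W : Set (StrongDual ℝ Y)} (hWK : W ⊆ K) (hWne : W.Nonempty)
    (hWconv : Convex ℝ W) (hWcl : IsClosed W) (hWinv : Set.MapsTo T W W)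
    (η₀ : ell1) {G : ℝ} (hG : ∀ ψ ∈ W, ‖η₀ - Jmap e A ψ‖ ≤ G)
    {ε : ℝ} (hε : 0 < ε) :
    ∃ (η : ell1) (c : ℝ) (χ : StrongDual ℝ Y) (W' : Set (StrongDual ℝ Y)),
      0 ≤ c ∧ c + ‖η₀ - η‖ ≤ G ∧
      χ ∈ W ∧ ‖χ - T χ‖ ≤ ε ∧ ‖Jmap e A χ - η‖ ≤ c + ε ∧
      (W' ⊆ K ∧ W'.Nonempty ∧ Convex ℝ W' ∧ IsClosed W' ∧ Set.MapsTo T W' W') ∧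
      (∀ ψ ∈ W', ‖η - Jmap e A ψ‖ ≤
        (‖(A : X →L[ℝ] Y)‖ * ‖(A.symm : Y →L[ℝ] X)‖ * (1+r) - 1) * c) := by
  classical
  set α : ℝ := ‖(A : X →L[ℝ] Y)‖ with hα
  set β : ℝ := ‖(A.symm : Y →L[ℝ] X)‖ with hβ
  have hα0 : 0 ≤ α := norm_nonneg _
  have hβ0 : 0 ≤ β := norm_nonneg _
  -- 1. approximate fixed point sequence
  have hφex : ∀ k : ℕ, ∃ ψ ∈ W, ‖ψ - T ψ‖ ≤ 1 / (k + 1) :=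
    fun k => afps_exists T hB0 hBnd hnonexp hWK hWne hWconv hWcl hWinv
      (by positivity : (0:ℝ) < 1 / (k + 1))
  set φ : ℕ → StrongDual ℝ Y := fun k => (hφex k).choose with hφ
  have hφW : ∀ k, φ k ∈ W := fun k => (hφex k).choose_spec.1
  have hφK : ∀ k, φ k ∈ K := fun k => hWK (hφW k)
  have hφdef : ∀ k, ‖φ k - T (φ k)‖ ≤ 1 / (k + 1) := fun k => (hφex k).choose_spec.2
  -- 2. transported sequence
  set v : ℕ → ell1 := fun k => Jmap e A (φ k) with hv
  have hvB : ∀ k, ‖v k‖ ≤ α * B := fun k =>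
    (Jmap_norm_le e A (φ k)).trans (mul_le_mul_of_nonneg_left (hBnd _ (hφK k)) hα0)
  -- 3. coordinatewise limits
  have hcoordex : ∀ i : ℕ, ∃ L, Tendsto (fun k => (v k : ∀ _ : ℕ, ℝ) i) ↑U (𝓝 L) ∧ |L| ≤ α * B :=
    fun i => exists_ulim U (fun k => (coord_le (v k) i).trans (hvB k))
  set ηf : ℕ → ℝ := fun i => (hcoordex i).choose with hηf
  have hηtend : ∀ i, Tendsto (fun k => (v k : ∀ _ : ℕ, ℝ) i) ↑U (𝓝 (ηf i)) :=
    fun i => (hcoordex i).choose_spec.1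
  have hηmem : Memℓp ηf (1 : ℝ≥0∞) := by
    refine mem_ell1_of_sums (C := α * B) ?_
    intro s
    have htend : Tendsto (fun k => ∑ i ∈ s, |(v k : ∀ _ : ℕ, ℝ) i|) ↑U
        (𝓝 (∑ i ∈ s, |ηf i|)) := tendsto_finset_sum _ (fun i _ => (hηtend i).abs)
    exact le_of_tendsto htend (Filter.Eventually.of_forall fun k =>
      (finsum_le (v k) s).trans (hvB k))
  set η : ell1 := ⟨ηf, hηmem⟩ with hη
  have hηcoe : ∀ i, (η : ∀ _ : ℕ, ℝ) i = ηf i := fun i => rfl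
  -- 4. the deviation sequence
  set ζ : ℕ → ell1 := fun k => v k - η with hζ
  have hζcoord : ∀ i, Tendsto (fun k => (ζ k : ∀ _ : ℕ, ℝ) i) ↑U (𝓝 0) := by
    intro i
    have h1 : ∀ k, (ζ k : ∀ _ : ℕ, ℝ) i = (v k : ∀ _ : ℕ, ℝ) i - ηf i := by
      intro k
      rw [hζ]
      simp [lp.coeFn_sub, hηcoe]
    simp only [h1]
    simpa using (hηtend i).sub_const (ηf i)
  have hζB : ∀ k, |‖ζ k‖| ≤ α * B + ‖η‖ := by
    intro k
    rw [abs_of_nonneg (norm_nonneg _)]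
    calc ‖ζ k‖ ≤ ‖v k‖ + ‖η‖ := norm_sub_le _ _
      _ ≤ α * B + ‖η‖ := by linarith [hvB k]
  obtain ⟨c, hctend, -⟩ := exists_ulim U hζB
  have hc0 : 0 ≤ c := ge_of_tendsto hctend (Filter.Eventually.of_forall fun k => norm_nonneg _)
  -- main step5 instantiation
  have hS5 : ∀ w : ell1, Tendsto (fun k => ‖w + ζ k‖) ↑U (𝓝 (‖w‖ + c)) :=
    fun w => step5 U ζ c hζcoord hctend w
  have hS5eq : ∀ (w : ell1) (g : ℕ → ell1), (∀ k, w + ζ k = g k) →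
      Tendsto (fun k => ‖g k‖) ↑U (𝓝 (‖w‖ + c)) := by
    intro w g hg
    have h := hS5 w
    simp only [hg] at h
    exact h
  have hS5eq' : ∀ (w : ell1) (g : ℕ → ell1), (∀ k, w - ζ k = g k) →
      Tendsto (fun k => ‖g k‖) ↑U (𝓝 (‖w‖ + c)) := by
    intro w g hg
    have h := hS5 (-w)
    have h2 : ∀ k, ‖-w + ζ k‖ = ‖g k‖ := by
      intro k
      rw [← hg k, ← norm_neg]
      congr 1
      abel
    simp only [h2, norm_neg] at h
    exact h
  -- 6. the linking inequality
  have hlink : c + ‖η₀ - η‖ ≤ G := by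
    have h1 : Tendsto (fun k => ‖η₀ - v k‖) ↑U (𝓝 (‖η₀ - η‖ + c)) := by
      refine hS5eq' (η₀ - η) (fun k => η₀ - v k) (fun k => ?_)
      rw [hζ]
      beta_reduce
      abel
    have h2 := le_of_tendsto h1 (Filter.Eventually.of_forall fun k => hG _ (hφW k))
    linarith
  -- 7. the distinguished near-fixed point
  have hE1 : ∀ᶠ k in ↑U, ‖ζ k‖ < c + ε :=
    hctend.eventually (gt_mem_nhds (lt_add_of_pos_right c hε))
  have hsmall : Tendsto (fun k : ℕ => 1 / ((k : ℝ) + 1)) ↑U (𝓝 0) :=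
    tendsto_one_div_add_atTop_nhds_zero_nat.mono_left hU
  have hE2 : ∀ᶠ k : ℕ in ↑U, 1 / ((k : ℝ) + 1) < ε := hsmall.eventually (gt_mem_nhds hε)
  obtain ⟨k₀, hk₁, hk₂⟩ := (hE1.and hE2).exists
  -- 8. weak-star cluster point of the sequence
  set uf : ℕ → WeakDual ℝ Y := fun k => StrongDual.toWeakDual (φ k) with huf
  have hle : ↑(U.map uf) ≤ Filter.principal
      ((fun φ : StrongDual ℝ Y => StrongDual.toWeakDual φ) '' K) := by
    rw [Ultrafilter.coe_map, Filter.le_principal_iff, Filter.mem_map]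
    exact Filter.Eventually.of_forall fun k => Set.mem_image_of_mem _ (hφK k)
  obtain ⟨ω, hωmem, hωle⟩ := hcptimg.ultrafilter_le_nhds (U.map uf) hle
  obtain ⟨phiL, hphiLK, hphiLeq⟩ := hωmem
  have heval : ∀ y : Y, Tendsto (fun k => φ k y) ↑U (𝓝 (phiL y)) := by
    intro y
    have h1 : Tendsto uf ↑U (𝓝 ω) := by
      rw [Filter.Tendsto, ← Ultrafilter.coe_map]
      exact hωle
    have h2 := ((WeakDual.eval_continuous y).tendsto ω).comp h1
    rw [← hphiLeq] at h2
    exact h2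
  -- 9. the ghost bound ‖η - u‖ ≤ r * c
  set u : ell1 := Jmap e A phiL with hudef
  have hpairlim : ∀ x : X,
      Tendsto (fun k => (e.symm (ζ k)) x) ↑U (𝓝 ((e.symm (u - η)) x)) := by
    intro x
    have h1 : ∀ k, (e.symm (ζ k)) x = φ k (A x) - (e.symm η) x := by
      intro k
      rw [hζ]
      simp only [map_sub, ContinuousLinearMap.sub_apply]
      rw [Jmap_pair e A (φ k) x]
    have h2 : (e.symm (u - η)) x = phiL (A x) - (e.symm η) x := by
      simp only [map_sub, ContinuousLinearMap.sub_apply]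
      rw [hudef, Jmap_pair e A phiL x]
    simp only [h1, h2]
    exact (heval (A x)).sub_const _
  have hηu : ‖η - u‖ ≤ r * c := by
    have key : ∀ x : X, |(e.symm (u - η)) x| ≤ r * c * ‖x‖ := by
      intro x
      refine le_of_forall_pos_le_add ?_
      intro δ hδ
      set ε' : ℝ := δ / (‖x‖ * c + 1) with hε'def
      have hε'pos : 0 < ε' := div_pos hδ (by positivity)
      obtain ⟨I, hI⟩ := eventually_atTop.1 (hbasis x hε'pos)
      have hpt : ∀ k, |(e.symm (ζ k)) x| ≤
          ‖x‖ * (∑ i ∈ Finset.range I, |(ζ k : ∀ _ : ℕ, ℝ) i|) + ((r + ε') * ‖x‖) * ‖ζ k‖ :=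
        fun k => pairing_abs_le' e (ζ k) x I ((r + ε') * ‖x‖)
          (by positivity) hI
      have hheadlim : Tendsto (fun k => ∑ i ∈ Finset.range I, |(ζ k : ∀ _ : ℕ, ℝ) i|) ↑U
          (𝓝 0) := by
        have := tendsto_finset_sum (Finset.range I) (fun i (_ : i ∈ Finset.range I) => (hζcoord i).abs)
        simpa using this
      have hrhs : Tendsto (fun k => ‖x‖ * (∑ i ∈ Finset.range I, |(ζ k : ∀ _ : ℕ, ℝ) i|)
          + ((r + ε') * ‖x‖) * ‖ζ k‖) ↑U (𝓝 (‖x‖ * 0 + ((r + ε') * ‖x‖) * c)) :=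
        (hheadlim.const_mul ‖x‖).add (hctend.const_mul _)
      have hbound := le_of_tendsto_of_tendsto' ((hpairlim x).abs) hrhs hpt
      have hq : ε' * (‖x‖ * c) ≤ δ := by
        rw [hε'def, div_mul_eq_mul_div, div_le_iff₀ (by positivity : (0:ℝ) < ‖x‖ * c + 1)]
        nlinarith [mul_nonneg (norm_nonneg x) hc0, hδ.le]
      calc |(e.symm (u - η)) x| ≤ ‖x‖ * 0 + ((r + ε') * ‖x‖) * c := hbound
        _ = r * c * ‖x‖ + ε' * (‖x‖ * c) := by ring
        _ ≤ r * c * ‖x‖ + δ := by linarith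
    have h1 : ‖e.symm (u - η)‖ ≤ r * c := by
      refine ContinuousLinearMap.opNorm_le_bound _ (by positivity) (fun x => ?_)
      rw [Real.norm_eq_abs]
      exact key x
    calc ‖η - u‖ = ‖u - η‖ := norm_sub_rev _ _
      _ = ‖e.symm (u - η)‖ := (e.symm.norm_map _).symm
      _ ≤ r * c := h1
  -- 10. the next-stage set
  have hPlex : ∀ ψ : StrongDual ℝ Y, ∃ L,
      Tendsto (fun k => ‖φ k - ψ‖) ↑U (𝓝 L) ∧ |L| ≤ B + ‖ψ‖ := by
    intro ψ
    refine exists_ulim U (fun k => ?_)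
    rw [abs_of_nonneg (norm_nonneg _)]
    exact (norm_sub_le _ _).trans (by linarith [hBnd _ (hφK k)])
  set Pl : StrongDual ℝ Y → ℝ := fun ψ => (hPlex ψ).choose with hPldef
  have hPl : ∀ ψ, Tendsto (fun k => ‖φ k - ψ‖) ↑U (𝓝 (Pl ψ)) :=
    fun ψ => (hPlex ψ).choose_spec.1
  set W' : Set (StrongDual ℝ Y) := {ψ | ψ ∈ K ∧ Pl ψ ≤ β * ((1 + r) * c)} with hW'
  have hW'K : W' ⊆ K := fun ψ h => h.1
  -- nonemptiness via phiL
  have hvtou : Tendsto (fun k => ‖v k - u‖) ↑U (𝓝 (‖η - u‖ + c)) := by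
    refine hS5eq (η - u) (fun k => v k - u) (fun k => ?_)
    rw [hζ]
    beta_reduce
    abel
  have hphiLW' : phiL ∈ W' := by
    refine ⟨hphiLK, ?_⟩
    have hptw : ∀ k, ‖φ k - phiL‖ ≤ β * ‖v k - u‖ := by
      intro k
      have h1 := norm_le_Jmap e A (φ k - phiL)
      rw [Jmap_sub e A] at h1
      exact h1
    have h2 := le_of_tendsto_of_tendsto' (hPl phiL) (hvtou.const_mul β) hptw
    calc Pl phiL ≤ β * (‖η - u‖ + c) := h2
      _ ≤ β * ((1 + r) * c) := by
          refine mul_le_mul_of_nonneg_left ?_ hβ0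
          linarith
  -- convexity
  have hW'conv : Convex ℝ W' := by
    intro ψ hψ ψ' hψ' a b ha hb hab
    refine ⟨hKconv hψ.1 hψ'.1 ha hb hab, ?_⟩
    have hptw : ∀ k, ‖φ k - (a • ψ + b • ψ')‖ ≤ a * ‖φ k - ψ‖ + b * ‖φ k - ψ'‖ := by
      intro k
      have hsplit : φ k - (a • ψ + b • ψ') = a • (φ k - ψ) + b • (φ k - ψ') := by
        calc φ k - (a • ψ + b • ψ') = (a + b) • φ k - (a • ψ + b • ψ') := by
              rw [hab, one_smul]
          _ = a • (φ k - ψ) + b • (φ k - ψ') := by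
              rw [add_smul, smul_sub, smul_sub]
              abel
      rw [hsplit]
      calc ‖a • (φ k - ψ) + b • (φ k - ψ')‖ ≤ ‖a • (φ k - ψ)‖ + ‖b • (φ k - ψ')‖ :=
            norm_add_le _ _
        _ = a * ‖φ k - ψ‖ + b * ‖φ k - ψ'‖ := by
            rw [norm_smul, norm_smul, Real.norm_eq_abs, Real.norm_eq_abs,
              abs_of_nonneg ha, abs_of_nonneg hb]
    have h2 := le_of_tendsto_of_tendsto' (hPl _)
      (((hPl ψ).const_mul a).add ((hPl ψ').const_mul b)) hptw
    calc Pl (a • ψ + b • ψ') ≤ a * Pl ψ + b * Pl ψ' := h2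
      _ ≤ a * (β * ((1 + r) * c)) + b * (β * ((1 + r) * c)) :=
          add_le_add (mul_le_mul_of_nonneg_left hψ.2 ha)
            (mul_le_mul_of_nonneg_left hψ'.2 hb)
      _ = (a + b) * (β * ((1 + r) * c)) := by ring
      _ = β * ((1 + r) * c) := by rw [hab, one_mul]
  -- closedness
  have hPllip : ∀ ψ ψ', |Pl ψ - Pl ψ'| ≤ ‖ψ - ψ'‖ := by
    intro ψ ψ'
    have hptw : ∀ k, |‖φ k - ψ‖ - ‖φ k - ψ'‖| ≤ ‖ψ - ψ'‖ := by
      intro k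
      have h5 := abs_norm_sub_norm_le (φ k - ψ) (φ k - ψ')
      have heq : (φ k - ψ) - (φ k - ψ') = ψ' - ψ := by abel
      rw [heq] at h5
      rwa [norm_sub_rev ψ' ψ] at h5
    have htend : Tendsto (fun k => |‖φ k - ψ‖ - ‖φ k - ψ'‖|) ↑U (𝓝 |Pl ψ - Pl ψ'|) :=
      ((hPl ψ).sub (hPl ψ')).abs
    exact le_of_tendsto htend (Filter.Eventually.of_forall hptw)
  have hPlcont : Continuous Pl := by
    have hlip : LipschitzWith 1 Pl := by
      apply LipschitzWith.of_dist_le_mul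
      intro ψ ψ'
      rw [NNReal.coe_one, one_mul, Real.dist_eq, dist_eq_norm]
      exact hPllip ψ ψ'
    exact hlip.continuous
  have hW'cl : IsClosed W' := by
    have hWeq : W' = K ∩ Pl ⁻¹' (Set.Iic (β * ((1 + r) * c))) := by
      ext ψ
      simp only [hW', Set.mem_setOf_eq, Set.mem_inter_iff, Set.mem_preimage, Set.mem_Iic]
    rw [hWeq]
    exact hKcl.inter (isClosed_Iic.preimage hPlcont)
  -- invariance
  have hW'inv : Set.MapsTo T W' W' := by
    intro ψ hψ
    refine ⟨hT hψ.1, ?_⟩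
    have hptw : ∀ k, ‖φ k - T ψ‖ ≤ 1 / ((k : ℝ) + 1) + ‖φ k - ψ‖ := by
      intro k
      calc ‖φ k - T ψ‖ ≤ ‖φ k - T (φ k)‖ + ‖T (φ k) - T ψ‖ := by
            have h6 : φ k - T ψ = (φ k - T (φ k)) + (T (φ k) - T ψ) := by abel
            rw [h6]
            exact norm_add_le _ _
        _ ≤ 1 / ((k : ℝ) + 1) + ‖φ k - ψ‖ :=
            add_le_add (hφdef k) (hnonexp _ (hφK k) _ hψ.1)
    have h2 := le_of_tendsto_of_tendsto' (hPl (T ψ)) (hsmall.add (hPl ψ)) hptw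
    rw [zero_add] at h2
    exact h2.trans hψ.2
  -- the contraction estimate on W'
  have hfinal : ∀ ψ ∈ W', ‖η - Jmap e A ψ‖ ≤ (α * β * (1 + r) - 1) * c := by
    intro ψ hψ
    have h1 : Tendsto (fun k => ‖v k - Jmap e A ψ‖) ↑U (𝓝 (‖η - Jmap e A ψ‖ + c)) := by
      refine hS5eq (η - Jmap e A ψ) (fun k => v k - Jmap e A ψ) (fun k => ?_)
      rw [hζ]
      beta_reduce
      abel
    have hptw : ∀ k, ‖v k - Jmap e A ψ‖ ≤ α * ‖φ k - ψ‖ := by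
      intro k
      have h2 := Jmap_norm_le e A (φ k - ψ)
      rw [Jmap_sub e A] at h2
      exact h2
    have h3 := le_of_tendsto_of_tendsto' h1 ((hPl ψ).const_mul α) hptw
    have h4 : α * Pl ψ ≤ α * (β * ((1 + r) * c)) := mul_le_mul_of_nonneg_left hψ.2 hα0
    have h5 : ‖η - Jmap e A ψ‖ + c ≤ α * (β * ((1 + r) * c)) := h3.trans h4
    nlinarith [h5]
  -- assemble
  refine ⟨η, c, φ k₀, W', hc0, hlink, hφW k₀, (hφdef k₀).trans hk₂.le, ?_,
    ⟨hW'K, ⟨phiL, hphiLW'⟩, hW'conv, hW'cl, hW'inv⟩, hfinal⟩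
  have h7 : Jmap e A (φ k₀) - η = ζ k₀ := by rw [hζ]
  rw [h7]
  exact hk₁.le
end Stage

set_option maxHeartbeats 2000000 in
theorem stmt13 (X : Type*) [NormedAddCommGroup X] [NormedSpace ℝ X] [CompleteSpace X]
    (e : StrongDual ℝ X ≃ₗᵢ[ℝ] ell1) (r : ℝ) (hr0 : 0 ≤ r) (hr1 : r < 1)
    (hlim : ∀ y : ell1,
      y ∈ @closure _ (wstar X e) ({z : ell1 | ∃ i, z = basisv i ∨ z = -basisv i} \ {y}) →
      ‖y‖ ≤ r)
    (Y : Type*) [NormedAddCommGroup Y] [NormedSpace ℝ Y] [CompleteSpace Y]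
    (A : X ≃L[ℝ] Y)
    (hA : ‖(A : X →L[ℝ] Y)‖ * ‖(A.symm : Y →L[ℝ] X)‖ < 2 / (1 + r))
    (K : Set (StrongDual ℝ Y)) (hK : K.Nonempty) (hconv : Convex ℝ K)
    (hcpt : @IsCompact _ (wsDual Y) K)
    (T : StrongDual ℝ Y → StrongDual ℝ Y) (hT : Set.MapsTo T K K)
    (hnonexp : ∀ x ∈ K, ∀ y ∈ K, ‖T x - T y‖ ≤ ‖x - y‖) :
    ∃ x ∈ K, T x = x := by
  classical
  obtain ⟨B, hB0, hBnd⟩ := K_bounded hcpt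
  have hKcl : IsClosed K := K_closed hcpt
  have hcptimg := K_compact_image hcpt
  have hbasis := basis_eventually e hlim
  set U : Ultrafilter ℕ := Ultrafilter.of atTop with hUdef
  have hU : ↑U ≤ (atTop : Filter ℕ) := Ultrafilter.of_le atTop
  set α : ℝ := ‖(A : X →L[ℝ] Y)‖ with hα
  set β : ℝ := ‖(A.symm : Y →L[ℝ] X)‖ with hβ
  have hα0 : 0 ≤ α := norm_nonneg _
  have hβ0 : 0 ≤ β := norm_nonneg _
  set γ : ℝ := α * β * (1 + r) - 1 with hγdef
  have h1r : (0:ℝ) < 1 + r := by linarith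
  have hγ1 : γ < 1 := by
    have h2 : α * β * (1 + r) < 2 := by
      have := (lt_div_iff₀ h1r).1 hA
      linarith
    simp only [hγdef]
    linarith
  set γ' : ℝ := max γ 0 with hγ'def
  have hγ'0 : 0 ≤ γ' := le_max_right _ _
  have hγ'1 : γ' < 1 := max_lt hγ1 one_pos
  -- the state type for the recursion
  set St : Type _ := {s : Set (StrongDual ℝ Y) × ell1 × ℝ //
    s.1 ⊆ K ∧ s.1.Nonempty ∧ Convex ℝ s.1 ∧ IsClosed s.1 ∧ Set.MapsTo T s.1 s.1 ∧
      ∀ ψ ∈ s.1, ‖s.2.1 - Jmap e A ψ‖ ≤ s.2.2} with hSt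
  -- one step of the recursion
  have hstep : ∀ (s : St) (j : ℕ), ∃ t : St × (StrongDual ℝ Y) × ℝ × ell1,
      t.1.1.2.1 = t.2.2.2 ∧
      t.1.1.2.2 = γ * t.2.2.1 ∧
      0 ≤ t.2.2.1 ∧
      t.2.2.1 + ‖s.1.2.1 - t.2.2.2‖ ≤ s.1.2.2 ∧
      t.2.1 ∈ K ∧ ‖t.2.1 - T t.2.1‖ ≤ (1/2)^j ∧
      ‖Jmap e A t.2.1 - t.2.2.2‖ ≤ t.2.2.1 + (1/2)^j := by
    intro s j
    obtain ⟨hsK, hsne, hsconv, hscl, hsinv, hsG⟩ := s.2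
    obtain ⟨η, c, χ, W', hc0, hlink, hχW, hχT, hχη, ⟨hW'K, hW'ne, hW'conv, hW'cl, hW'inv⟩, hW'G⟩ :=
      stage e A T U hr0 hbasis hB0 hBnd hconv hKcl hcptimg hT hnonexp hU
        hsK hsne hsconv hscl hsinv s.1.2.1 hsG
        (by positivity : (0:ℝ) < (1/2)^j)
    refine ⟨⟨⟨(W', η, γ * c), ⟨hW'K, hW'ne, hW'conv, hW'cl, hW'inv, ?_⟩⟩, χ, c, η⟩,
      rfl, rfl, hc0, hlink, hsK hχW, hχT, hχη⟩
    intro ψ hψ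
    exact hW'G ψ hψ
  choose F hF1 hF2 hF3 hF4 hF5 hF6 hF7 using hstep
  -- initial state
  have hs₀G : ∀ ψ ∈ K, ‖(0 : ell1) - Jmap e A ψ‖ ≤ α * B := by
    intro ψ hψ
    rw [zero_sub, norm_neg]
    exact (Jmap_norm_le e A ψ).trans (mul_le_mul_of_nonneg_left (hBnd ψ hψ) hα0)
  set s₀ : St := ⟨(K, (0 : ell1), α * B),
    ⟨subset_rfl, hK, hconv, hKcl, hT, hs₀G⟩⟩ with hs₀
  -- the iterated states
  set S : ℕ → St := fun j => Nat.rec s₀ (fun j' prev => (F prev j').1) j with hSdef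
  have hSsucc : ∀ j, S (j + 1) = (F (S j) j).1 := fun j => rfl
  set cs : ℕ → ℝ := fun j => (F (S j) j).2.2.1 with hcs
  set ηs : ℕ → ell1 := fun j => (F (S j) j).2.2.2 with hηs
  set χs : ℕ → StrongDual ℝ Y := fun j => (F (S j) j).2.1 with hχs
  have hc0 : ∀ j, 0 ≤ cs j := fun j => hF3 (S j) j
  have hχK : ∀ j, χs j ∈ K := fun j => hF5 (S j) j
  have hχT : ∀ j, ‖χs j - T (χs j)‖ ≤ (1/2)^j := fun j => hF6 (S j) j
  have hχη : ∀ j, ‖Jmap e A (χs j) - ηs j‖ ≤ cs j + (1/2)^j := fun j => hF7 (S j) j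
  -- the recursive inequality
  have hrec : ∀ j, cs (j+1) + ‖ηs j - ηs (j+1)‖ ≤ γ * cs j := by
    intro j
    have h1 := hF4 (S (j+1)) (j+1)
    rw [hSsucc j] at h1
    rw [hF1 (S j) j, hF2 (S j) j] at h1
    exact h1
  have hcdec : ∀ j, cs (j+1) ≤ γ' * cs j := by
    intro j
    have h1 := hrec j
    have h2 : γ * cs j ≤ γ' * cs j := mul_le_mul_of_nonneg_right (le_max_left _ _) (hc0 j)
    have h3 : 0 ≤ ‖ηs j - ηs (j+1)‖ := norm_nonneg _
    linarith
  have hηdec : ∀ j, ‖ηs j - ηs (j+1)‖ ≤ γ' * cs j := by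
    intro j
    have h1 := hrec j
    have h2 : γ * cs j ≤ γ' * cs j := mul_le_mul_of_nonneg_right (le_max_left _ _) (hc0 j)
    have h3 := hc0 (j+1)
    linarith
  have hcgeo : ∀ j, cs j ≤ γ' ^ j * cs 0 := by
    intro j
    induction j with
    | zero => simp
    | succ n ih =>
        calc cs (n+1) ≤ γ' * cs n := hcdec n
          _ ≤ γ' * (γ' ^ n * cs 0) := mul_le_mul_of_nonneg_left ih hγ'0
          _ = γ' ^ (n+1) * cs 0 := by ring
  -- Cauchy sequence
  have hχdist : ∀ j, ‖χs j - χs (j+1)‖ ≤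
      β * ((2 + γ') * (γ' ^ j * cs 0) + 2 * (1/2)^j) := by
    intro j
    have h1 : ‖χs j - χs (j+1)‖ ≤ β * ‖Jmap e A (χs j - χs (j+1))‖ := norm_le_Jmap e A _
    rw [Jmap_sub e A] at h1
    have h2 : ‖Jmap e A (χs j) - Jmap e A (χs (j+1))‖ ≤
        ‖Jmap e A (χs j) - ηs j‖ + ‖ηs j - ηs (j+1)‖ + ‖ηs (j+1) - Jmap e A (χs (j+1))‖ := by
      have heq : Jmap e A (χs j) - Jmap e A (χs (j+1)) =
          (Jmap e A (χs j) - ηs j) + (ηs j - ηs (j+1)) + (ηs (j+1) - Jmap e A (χs (j+1))) := by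
        abel
      rw [heq]
      exact (norm_add_le _ _).trans (add_le_add_left (norm_add_le _ _) _)
    have h3 : ‖ηs (j+1) - Jmap e A (χs (j+1))‖ ≤ cs (j+1) + (1/2)^(j+1) := by
      rw [norm_sub_rev]
      exact hχη (j+1)
    have h4 : cs (j+1) ≤ γ' * cs j := hcdec j
    have h5 : cs j ≤ γ' ^ j * cs 0 := hcgeo j
    have h6 : (1/2:ℝ)^(j+1) ≤ (1/2)^j := by
      apply pow_le_pow_of_le_one (by norm_num) (by norm_num)
      omega
    have h7 : γ' * cs j ≤ γ' * (γ' ^ j * cs 0) := mul_le_mul_of_nonneg_left h5 hγ'0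
    have h8 : γ' * (γ' ^ j * cs 0) ≤ γ' ^ j * cs 0 := by
      have h9 : 0 ≤ γ' ^ j * cs 0 := mul_nonneg (pow_nonneg hγ'0 j) (hc0 0)
      nlinarith
    calc ‖χs j - χs (j+1)‖ ≤ β * ‖Jmap e A (χs j) - Jmap e A (χs (j+1))‖ := h1
      _ ≤ β * ((cs j + (1/2)^j) + γ' * cs j + (cs (j+1) + (1/2)^(j+1))) := by
          refine mul_le_mul_of_nonneg_left ?_ hβ0
          have := hχη j
          have := hηdec j
          linarith
      _ ≤ β * ((2 + γ') * (γ' ^ j * cs 0) + 2 * (1/2)^j) := by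
          refine mul_le_mul_of_nonneg_left ?_ hβ0
          have h9 : 0 ≤ γ' ^ j * cs 0 := mul_nonneg (pow_nonneg hγ'0 j) (hc0 0)
          nlinarith
  have hsummable : Summable (fun j => β * ((2 + γ') * (γ' ^ j * cs 0) + 2 * (1/2:ℝ)^j)) := by
    apply Summable.mul_left
    apply Summable.add
    · have := (summable_geometric_of_lt_one hγ'0 hγ'1)
      exact ((this.mul_right (cs 0)).mul_left (2 + γ'))
    · have h2 : Summable (fun j => ((1:ℝ)/2)^j) :=
        summable_geometric_of_lt_one (by norm_num) (by norm_num)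
      exact h2.mul_left 2
  have hcauchy : CauchySeq χs := by
    apply cauchySeq_of_dist_le_of_summable _ _ hsummable
    intro n
    rw [dist_eq_norm]
    exact hχdist n
  obtain ⟨χL, hχL⟩ := cauchySeq_tendsto_of_complete hcauchy
  have hχLK : χL ∈ K := hKcl.mem_of_tendsto hχL (Filter.Eventually.of_forall hχK)
  refine ⟨χL, hχLK, ?_⟩
  -- the fixed point property
  have hkey : ∀ j, ‖T χL - χL‖ ≤ 2 * ‖χL - χs j‖ + (1/2)^j := by
    intro j
    have h1 : ‖T χL - χL‖ ≤ ‖T χL - T (χs j)‖ + ‖T (χs j) - χs j‖ + ‖χs j - χL‖ := by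
      have heq : T χL - χL = (T χL - T (χs j)) + (T (χs j) - χs j) + (χs j - χL) := by abel
      rw [heq]
      exact (norm_add_le _ _).trans (add_le_add_left (norm_add_le _ _) _)
    have h2 : ‖T χL - T (χs j)‖ ≤ ‖χL - χs j‖ := hnonexp _ hχLK _ (hχK j)
    have h3 : ‖T (χs j) - χs j‖ ≤ (1/2)^j := by
      rw [norm_sub_rev]
      exact hχT j
    have h4 : ‖χs j - χL‖ = ‖χL - χs j‖ := norm_sub_rev _ _
    linarith
  have hlim0 : Tendsto (fun j => 2 * ‖χL - χs j‖ + (1/2:ℝ)^j) atTop (𝓝 0) := by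
    have h1 : Tendsto (fun j => ‖χs j - χL‖) atTop (𝓝 0) :=
      tendsto_iff_norm_sub_tendsto_zero.1 hχL
    have h1' : Tendsto (fun j => ‖χL - χs j‖) atTop (𝓝 0) := by
      simp only [norm_sub_rev χL]
      exact h1
    have h2 : Tendsto (fun j => ((1:ℝ)/2)^j) atTop (𝓝 0) :=
      tendsto_pow_atTop_nhds_zero_of_lt_one (by norm_num) (by norm_num)
    have h3 := (h1'.const_mul 2).add h2
    simpa using h3
  have : ‖T χL - χL‖ ≤ 0 := le_of_tendsto_of_tendsto' tendsto_const_nhds hlim0 hkey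
  have : T χL - χL = 0 := norm_le_zero_iff.1 this
  exact sub_eq_zero.1 this
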